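/- For a fixed nonnegative real C and positive integer t, and for any α ≥ 0 and integer k with 0 ≤ k ≤ t satisfying k·α + (t−k)·2α = C, it holds that k·α² + (t−k)·4α² ≤ (9/8)·C²/t. -/
import Mathlib

theorem stmt6 (C : ℝ) (hC : 0 ≤ C) (t : ℕ) (ht : 1 ≤ t)
    (α : ℝ) (hα : 0 ≤ α) (k : ℕ) (hk : k ≤ t)
    (hsum : (k : ℝ) * α + ((t : ℝ) - k) * (2 * α) = C) :
    (k : ℝ) * α ^ 2 + ((t : ℝ) - k) * (4 * α ^ 2) ≤ 9 / 8 * C ^ 2 / t := by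
  have htpos : (0 : ℝ) < t := by exact_mod_cast ht
  have hkt : (k : ℝ) ≤ t := by exact_mod_cast hk
  rw [le_div_iff₀ htpos]
  nlinarith [sq_nonneg (2 * (t : ℝ) - 3 * k), sq_nonneg α, mul_nonneg (sq_nonneg α) (sq_nonneg (2 * (t : ℝ) - 3 * k))]
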